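/- Every root α of the polynomial h(X) = X^8 + 6X^7 + 12X^6 + 3X^5 - 30X^4 - 63X^3 - 63X^2 - 36X - 9 in an algebraic closure of ℚ_3 has 3-adic absolute value |α|_3 = 3^{-1/4}; equivalently, the Newton polygon of h with respect to the prime 3 consists of a single segment of slope -1/4. -/
import Mathlib


open Polynomial

/-- `h(X) = X⁸ + 6X⁷ + 12X⁶ + 3X⁵ - 30X⁴ - 63X³ - 63X² - 36X - 9`. -/
noncomputable def h₅₁ : ℤ[X] :=
  X ^ 8 + C 6 * X ^ 7 + C 12 * X ^ 6 + C 3 * X ^ 5 - C 30 * X ^ 4 - C 63 * X ^ 3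
    - C 63 * X ^ 2 - C 36 * X - C 9

section Aux

variable {L : Type*} [NontriviallyNormedField L]

/-- A multiplicative field norm bounded by 1 on the naturals is nonarchimedean. -/
lemma na_of_natnorm (hnat : ∀ n : ℕ, ‖(n : L)‖ ≤ 1) (x y : L) :
    ‖x + y‖ ≤ max ‖x‖ ‖y‖ := by
  set m := max ‖x‖ ‖y‖ with hm
  have hm0 : 0 ≤ m := le_trans (norm_nonneg x) (le_max_left _ _)
  by_contra hgt
  push_neg at hgt
  have key : ∀ n : ℕ, ‖x + y‖ ^ n ≤ (n + 1) * m ^ n := by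
    intro n
    calc ‖x + y‖ ^ n = ‖(x + y) ^ n‖ := (norm_pow _ _).symm
      _ = ‖∑ k ∈ Finset.range (n + 1), x ^ k * y ^ (n - k) * (n.choose k : L)‖ := by
          rw [add_pow]
      _ ≤ ∑ k ∈ Finset.range (n + 1), ‖x ^ k * y ^ (n - k) * (n.choose k : L)‖ :=
          norm_sum_le _ _
      _ ≤ ∑ _k ∈ Finset.range (n + 1), m ^ n := by
          apply Finset.sum_le_sum
          intro k hk
          rw [Finset.mem_range, Nat.lt_succ_iff] at hk
          rw [norm_mul, norm_mul, norm_pow, norm_pow]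
          have h1 : ‖x‖ ^ k * ‖y‖ ^ (n - k) * ‖(n.choose k : L)‖
              ≤ m ^ k * m ^ (n - k) * 1 := by
            have hx : ‖x‖ ≤ m := le_max_left _ _
            have hy : ‖y‖ ≤ m := le_max_right _ _
            have hxk := pow_le_pow_left₀ (norm_nonneg x) hx k
            have hyk := pow_le_pow_left₀ (norm_nonneg y) hy (n - k)
            have hmk : (0:ℝ) ≤ m ^ k := pow_nonneg hm0 k
            exact mul_le_mul (mul_le_mul hxk hyk (by positivity) hmk) (hnat _)
              (norm_nonneg _) (by positivity)
          calc ‖x‖ ^ k * ‖y‖ ^ (n - k) * ‖(n.choose k : L)‖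
              ≤ m ^ k * m ^ (n - k) * 1 := h1
            _ = m ^ n := by rw [mul_one, ← pow_add, Nat.add_sub_cancel' hk]
      _ = (n + 1) * m ^ n := by
          rw [Finset.sum_const, Finset.card_range, nsmul_eq_mul]
          push_cast
          ring
  -- derive a contradiction
  have hmpos : 0 < m := by
    rcases hm0.lt_or_eq with h | h
    · exact h
    · exfalso
      have hx : ‖x‖ ≤ m := le_max_left _ _
      have hy : ‖y‖ ≤ m := le_max_right _ _
      have hadd := norm_add_le x y
      linarith
  set t := ‖x + y‖ / m with ht
  have ht1 : 1 < t := (one_lt_div hmpos).mpr hgt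
  have htn : ∀ n : ℕ, t ^ n ≤ n + 1 := by
    intro n
    rw [ht, div_pow, div_le_iff₀ (pow_pos hmpos n)]
    exact key n
  set d := t - 1 with hd
  have hd0 : 0 < d := by simp [hd]; linarith
  obtain ⟨n, hn2, hn3⟩ : ∃ n : ℕ, 2 ≤ n ∧ 3 / d ^ 2 ≤ (n : ℝ) := by
    refine ⟨max 2 ⌈3 / d ^ 2⌉₊, le_max_left _ _, ?_⟩
    calc (3 / d ^ 2 : ℝ) ≤ ⌈3 / d ^ 2⌉₊ := Nat.le_ceil _
      _ ≤ (max 2 ⌈3 / d ^ 2⌉₊ : ℕ) := by exact_mod_cast Nat.cast_le.mpr (le_max_right _ _)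
  have hber : 1 + (n : ℝ) * d ≤ t ^ n := by
    have := one_add_mul_le_pow (a := d) (by linarith) n
    simpa [hd] using this
  have hnd0 : 0 ≤ 1 + (n : ℝ) * d := by positivity
  have hsq : (1 + (n : ℝ) * d) ^ 2 ≤ t ^ (2 * n) := by
    calc (1 + (n : ℝ) * d) ^ 2 ≤ (t ^ n) ^ 2 := by
          apply pow_le_pow_left₀ hnd0 hber
      _ = t ^ (2 * n) := by rw [← pow_mul, mul_comm]
  have hlow : (n : ℝ) ^ 2 * d ^ 2 ≤ (1 + (n : ℝ) * d) ^ 2 := by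
    have h1 : 0 ≤ (n : ℝ) * d := by positivity
    nlinarith
  have hbig : 2 * (n : ℝ) + 1 < (n : ℝ) ^ 2 * d ^ 2 := by
    have hnR : (2 : ℝ) ≤ (n : ℝ) := by exact_mod_cast hn2
    have h3 : 3 ≤ (n : ℝ) * d ^ 2 := by
      rw [div_le_iff₀ (by positivity)] at hn3
      linarith
    nlinarith
  have := htn (2 * n)
  push_cast at this
  nlinarith

lemma na_dom (hnat : ∀ n : ℕ, ‖(n : L)‖ ≤ 1) {x y : L} (h : ‖x‖ < ‖y‖) :
    ‖x + y‖ = ‖y‖ := by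
  refine le_antisymm (le_trans (na_of_natnorm hnat x y) (max_le h.le le_rfl)) ?_
  by_contra hlt
  push_neg at hlt
  have h2 : ‖y‖ ≤ max ‖x + y‖ ‖x‖ := by
    have := na_of_natnorm hnat (x + y) (-x)
    simpa using this
  rcases max_cases ‖x + y‖ ‖x‖ with ⟨he, _⟩ | ⟨he, _⟩ <;> rw [he] at h2 <;> linarith

lemma na_lt (hnat : ∀ n : ℕ, ‖(n : L)‖ ≤ 1) {x y : L} {B : ℝ}
    (hx : ‖x‖ < B) (hy : ‖y‖ < B) : ‖x + y‖ < B :=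
  lt_of_le_of_lt (na_of_natnorm hnat x y) (max_lt hx hy)

lemma na_lt_sub (hnat : ∀ n : ℕ, ‖(n : L)‖ ≤ 1) {x y : L} {B : ℝ}
    (hx : ‖x‖ < B) (hy : ‖y‖ < B) : ‖x - y‖ < B := by
  rw [sub_eq_add_neg]
  exact na_lt hnat hx (by simpa using hy)

end Aux

/-- Every root of `h(X) = X⁸ + 6X⁷ + 12X⁶ + 3X⁵ - 30X⁴ - 63X³ - 63X² - 36X - 9` in any
normed field extension of `ℚ₃` (with the norm extending the 3-adic absolute value,
normalized by `|3|₃ = 1/3`) has absolute value `3^(-1/4)`; i.e. the Newton polygon of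
`h` at the prime 3 is a single segment of slope `-1/4`. -/
theorem roots_abs_three_pow_neg_quarter
    (L : Type*) [NontriviallyNormedField L] [Algebra ℚ_[3] L]
    (hiso : ∀ q : ℚ_[3], ‖algebraMap ℚ_[3] L q‖ = ‖q‖)
    (α : L) (hα : Polynomial.aeval α h₅₁ = 0) :
    ‖α‖ = (3 : ℝ) ^ (-(1 / 4 : ℝ)) := by
  -- the norm on L restricted to integers
  have hint : ∀ k : ℤ, ‖((k : ℤ) : L)‖ = ‖((k : ℤ) : ℚ_[3])‖ := by
    intro k
    rw [show ((k : ℤ) : L) = algebraMap ℚ_[3] L ((k : ℤ) : ℚ_[3]) by rw [map_intCast], hiso]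
  have hnat : ∀ n : ℕ, ‖(n : L)‖ ≤ 1 := by
    intro n
    have := hint (n : ℤ)
    push_cast at this
    rw [this]
    exact_mod_cast Padic.norm_int_le_one (p := 3) (n : ℤ)
  -- norms of the relevant integers
  have hunit : ∀ k : ℤ, ¬((3 : ℤ) ∣ k) → ‖((k : ℤ) : L)‖ = 1 := by
    intro k hk
    rw [hint]
    refine le_antisymm (Padic.norm_int_le_one k) (not_lt.mp ?_)
    rw [Padic.norm_intCast_lt_one_iff]
    exact_mod_cast hk
  have h3L : ‖(3 : L)‖ = (3 : ℝ) ^ (-(1 : ℝ)) := by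
    have h1 : ((3 : ℤ) : L) = algebraMap ℚ_[3] L ((3 : ℕ) : ℚ_[3]) := by
      rw [map_natCast]; push_cast; ring
    have h2 : ‖((3 : ℤ) : L)‖ = ((3 : ℕ) : ℝ)⁻¹ := by
      rw [h1, hiso]; exact Padic.norm_p
    push_cast at h2
    rw [h2, Real.rpow_neg_one]
  have hv1 : ∀ k u : ℤ, ¬((3 : ℤ) ∣ u) → k = 3 * u → ‖((k : ℤ) : L)‖ = (3 : ℝ) ^ (-(1 : ℝ)) := by
    intro k u hu hk
    subst hk
    push_cast
    rw [norm_mul]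
    have h3 : ‖((3 : ℤ) : L)‖ = (3 : ℝ) ^ (-(1 : ℝ)) := by push_cast; exact h3L
    push_cast at h3
    rw [h3, hunit u hu, mul_one]
  have hv2 : ∀ k u : ℤ, ¬((3 : ℤ) ∣ u) → k = 9 * u → ‖((k : ℤ) : L)‖ = (3 : ℝ) ^ (-(2 : ℝ)) := by
    intro k u hu hk
    subst hk
    have h9 : ((9 * u : ℤ) : L) = ((3 : ℤ) : L) * ((3 : ℤ) : L) * ((u : ℤ) : L) := by
      push_cast; ring
    rw [h9, norm_mul, norm_mul, hunit u hu, mul_one]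
    have h3 : ‖((3 : ℤ) : L)‖ = (3 : ℝ) ^ (-(1 : ℝ)) := by push_cast; exact h3L
    rw [h3, ← Real.rpow_add (by norm_num)]
    norm_num
  -- the equation satisfied by α
  simp only [h₅₁, map_add, map_sub, map_mul, map_pow, aeval_X, aeval_C, eq_intCast,
    map_ofNat] at hα
  set r := ‖α‖ with hr
  set s := (3 : ℝ) ^ (-(1 / 4 : ℝ)) with hs
  have hs0 : (0 : ℝ) < s := Real.rpow_pos_of_pos (by norm_num) _
  have spow : ∀ k : ℕ, s ^ k = (3 : ℝ) ^ (-(k : ℝ) / 4) := by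
    intro k
    rw [hs, ← Real.rpow_natCast ((3:ℝ) ^ (-(1/4 : ℝ))) k, ← Real.rpow_mul (by norm_num)]
    ring_nf
  have hrpow_lt : ∀ a b : ℝ, a < b → (3 : ℝ) ^ a < (3 : ℝ) ^ b := fun a b h =>
    Real.rpow_lt_rpow_left_iff (by norm_num : (1:ℝ) < 3) |>.mpr h
  have hrpow_le : ∀ a b : ℝ, a ≤ b → (3 : ℝ) ^ a ≤ (3 : ℝ) ^ b := fun a b h =>
    Real.rpow_le_rpow_left_iff (by norm_num : (1:ℝ) < 3) |>.mpr h
  rcases lt_trichotomy r s with hlt | heq | hgt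
  · -- r < s : the constant term dominates, contradiction with h(α) = 0
    exfalso
    have key2 : ∀ (i : ℕ) (v : ℝ), i ≠ 0 → (8 : ℝ) ≤ i + 4 * v →
        (3 : ℝ) ^ (-v) * r ^ i < (3 : ℝ) ^ (-(2 : ℝ)) := by
      intro i v hi hiv
      have h2 : r ^ i < s ^ i := pow_lt_pow_left₀ hlt (norm_nonneg α) hi
      calc (3 : ℝ) ^ (-v) * r ^ i < (3 : ℝ) ^ (-v) * s ^ i :=
            mul_lt_mul_of_pos_left h2 (Real.rpow_pos_of_pos (by norm_num) _)
        _ = (3 : ℝ) ^ (-v + -(i : ℝ) / 4) := by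
            rw [spow, ← Real.rpow_add (by norm_num)]
        _ ≤ (3 : ℝ) ^ (-(2 : ℝ)) := hrpow_le _ _ (by linarith)
    -- each non-constant term has norm < ‖9‖ = 3⁻²
    have h9 : ‖(9 : L)‖ = (3 : ℝ) ^ (-(2 : ℝ)) := by
      have := hv2 9 1 (by decide) (by ring)
      push_cast at this
      exact this
    have hT : ‖α ^ 8 + 6 * α ^ 7 + 12 * α ^ 6 + 3 * α ^ 5 - 30 * α ^ 4 - 63 * α ^ 3
        - 63 * α ^ 2 - 36 * α‖ < (3 : ℝ) ^ (-(2 : ℝ)) := by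
      have t8 : ‖α ^ 8‖ < (3 : ℝ) ^ (-(2 : ℝ)) := by
        rw [norm_pow]
        have := key2 8 0 (by norm_num) (by norm_num)
        simpa using this
      have t7 : ‖(6 : L) * α ^ 7‖ < (3 : ℝ) ^ (-(2 : ℝ)) := by
        rw [norm_mul, norm_pow]
        have h6 := hv1 6 2 (by decide) (by ring); push_cast at h6
        rw [h6]; exact key2 7 1 (by norm_num) (by norm_num)
      have t6 : ‖(12 : L) * α ^ 6‖ < (3 : ℝ) ^ (-(2 : ℝ)) := by
        rw [norm_mul, norm_pow]
        have h12 := hv1 12 4 (by decide) (by ring); push_cast at h12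
        rw [h12]; exact key2 6 1 (by norm_num) (by norm_num)
      have t5 : ‖(3 : L) * α ^ 5‖ < (3 : ℝ) ^ (-(2 : ℝ)) := by
        rw [norm_mul, norm_pow, h3L]
        exact key2 5 1 (by norm_num) (by norm_num)
      have t4 : ‖(30 : L) * α ^ 4‖ < (3 : ℝ) ^ (-(2 : ℝ)) := by
        rw [norm_mul, norm_pow]
        have h30 := hv1 30 10 (by decide) (by ring); push_cast at h30
        rw [h30]; exact key2 4 1 (by norm_num) (by norm_num)
      have t3 : ‖(63 : L) * α ^ 3‖ < (3 : ℝ) ^ (-(2 : ℝ)) := by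
        rw [norm_mul, norm_pow]
        have h63 := hv2 63 7 (by decide) (by ring); push_cast at h63
        rw [h63]; exact key2 3 2 (by norm_num) (by norm_num)
      have t2 : ‖(63 : L) * α ^ 2‖ < (3 : ℝ) ^ (-(2 : ℝ)) := by
        rw [norm_mul, norm_pow]
        have h63 := hv2 63 7 (by decide) (by ring); push_cast at h63
        rw [h63]; exact key2 2 2 (by norm_num) (by norm_num)
      have t1 : ‖(36 : L) * α‖ < (3 : ℝ) ^ (-(2 : ℝ)) := by
        rw [norm_mul]
        have h36 := hv2 36 4 (by decide) (by ring); push_cast at h36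
        rw [h36]
        have := key2 1 2 (by norm_num) (by norm_num)
        simpa using this
      exact na_lt_sub hnat (na_lt_sub hnat (na_lt_sub hnat (na_lt_sub hnat
        (na_lt hnat (na_lt hnat (na_lt hnat t8 t7) t6) t5) t4) t3) t2) t1
    have hdom : ‖(α ^ 8 + 6 * α ^ 7 + 12 * α ^ 6 + 3 * α ^ 5 - 30 * α ^ 4 - 63 * α ^ 3
        - 63 * α ^ 2 - 36 * α) + (-(9 : L))‖ = ‖(-(9 : L))‖ := by
      apply na_dom hnat
      rw [norm_neg, h9]
      exact hT
    rw [show (α ^ 8 + 6 * α ^ 7 + 12 * α ^ 6 + 3 * α ^ 5 - 30 * α ^ 4 - 63 * α ^ 3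
        - 63 * α ^ 2 - 36 * α) + (-(9 : L)) = α ^ 8 + 6 * α ^ 7 + 12 * α ^ 6 + 3 * α ^ 5
        - 30 * α ^ 4 - 63 * α ^ 3 - 63 * α ^ 2 - 36 * α - 9 by ring, hα, norm_zero,
      norm_neg, h9] at hdom
    have : (0 : ℝ) < (3 : ℝ) ^ (-(2 : ℝ)) := Real.rpow_pos_of_pos (by norm_num) _
    linarith [hdom, this]
  · exact heq
  · -- r > s : the leading term dominates, contradiction with h(α) = 0
    exfalso
    have hr0 : (0 : ℝ) < r := lt_trans hs0 hgt
    have key1 : ∀ (i k : ℕ) (v : ℝ), i + k = 8 → k ≠ 0 → (k : ℝ) ≤ 4 * v →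
        (3 : ℝ) ^ (-v) * r ^ i < r ^ 8 := by
      intro i k v hik hk hkv
      have h1 : (3 : ℝ) ^ (-v) ≤ s ^ k := by
        rw [spow]
        exact hrpow_le _ _ (by linarith)
      have h2 : s ^ k < r ^ k := pow_lt_pow_left₀ hgt hs0.le hk
      calc (3 : ℝ) ^ (-v) * r ^ i < r ^ k * r ^ i :=
            mul_lt_mul_of_pos_right (lt_of_le_of_lt h1 h2) (pow_pos hr0 i)
        _ = r ^ 8 := by rw [← pow_add]; congr 1; omega
    have hT : ‖(6 : L) * α ^ 7 + 12 * α ^ 6 + 3 * α ^ 5 - 30 * α ^ 4 - 63 * α ^ 3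
        - 63 * α ^ 2 - 36 * α - 9‖ < r ^ 8 := by
      have t7 : ‖(6 : L) * α ^ 7‖ < r ^ 8 := by
        rw [norm_mul, norm_pow]
        have h6 := hv1 6 2 (by decide) (by ring); push_cast at h6
        rw [h6]; exact key1 7 1 1 (by norm_num) (by norm_num) (by norm_num)
      have t6 : ‖(12 : L) * α ^ 6‖ < r ^ 8 := by
        rw [norm_mul, norm_pow]
        have h12 := hv1 12 4 (by decide) (by ring); push_cast at h12
        rw [h12]; exact key1 6 2 1 (by norm_num) (by norm_num) (by norm_num)
      have t5 : ‖(3 : L) * α ^ 5‖ < r ^ 8 := by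
        rw [norm_mul, norm_pow, h3L]
        exact key1 5 3 1 (by norm_num) (by norm_num) (by norm_num)
      have t4 : ‖(30 : L) * α ^ 4‖ < r ^ 8 := by
        rw [norm_mul, norm_pow]
        have h30 := hv1 30 10 (by decide) (by ring); push_cast at h30
        rw [h30]; exact key1 4 4 1 (by norm_num) (by norm_num) (by norm_num)
      have t3 : ‖(63 : L) * α ^ 3‖ < r ^ 8 := by
        rw [norm_mul, norm_pow]
        have h63 := hv2 63 7 (by decide) (by ring); push_cast at h63
        rw [h63]; exact key1 3 5 2 (by norm_num) (by norm_num) (by norm_num)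
      have t2 : ‖(63 : L) * α ^ 2‖ < r ^ 8 := by
        rw [norm_mul, norm_pow]
        have h63 := hv2 63 7 (by decide) (by ring); push_cast at h63
        rw [h63]; exact key1 2 6 2 (by norm_num) (by norm_num) (by norm_num)
      have t1 : ‖(36 : L) * α‖ < r ^ 8 := by
        rw [norm_mul]
        have h36 := hv2 36 4 (by decide) (by ring); push_cast at h36
        rw [h36]
        have := key1 1 7 2 (by norm_num) (by norm_num) (by norm_num)
        simpa using this
      have t0 : ‖(9 : L)‖ < r ^ 8 := by
        have h9 := hv2 9 1 (by decide) (by ring); push_cast at h9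
        rw [h9]
        have := key1 0 8 2 (by norm_num) (by norm_num) (by norm_num)
        simpa using this
      exact na_lt_sub hnat (na_lt_sub hnat (na_lt_sub hnat (na_lt_sub hnat (na_lt_sub hnat
        (na_lt hnat (na_lt hnat t7 t6) t5) t4) t3) t2) t1) t0
    have hdom : ‖((6 : L) * α ^ 7 + 12 * α ^ 6 + 3 * α ^ 5 - 30 * α ^ 4 - 63 * α ^ 3
        - 63 * α ^ 2 - 36 * α - 9) + α ^ 8‖ = ‖α ^ 8‖ := by
      apply na_dom hnat
      rw [norm_pow]
      exact hT
    rw [show ((6 : L) * α ^ 7 + 12 * α ^ 6 + 3 * α ^ 5 - 30 * α ^ 4 - 63 * α ^ 3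
        - 63 * α ^ 2 - 36 * α - 9) + α ^ 8 = α ^ 8 + 6 * α ^ 7 + 12 * α ^ 6 + 3 * α ^ 5
        - 30 * α ^ 4 - 63 * α ^ 3 - 63 * α ^ 2 - 36 * α - 9 by ring, hα, norm_zero,
      norm_pow] at hdom
    have : (0 : ℝ) < r ^ 8 := pow_pos hr0 8
    linarith [hdom, this]
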